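/- Given an instance I of size n containing at least one 0, the instances of size n+1 in conflict with I are exactly the strings obtained by inserting one 0 into I at any position strictly after the last 0 of I (including at the end). Consequently, if I has suffix 0 followed by d-1 ones, then I has exactly d such children. -/

import Mathlib

/-- `r` is the (0-indexed) position of the last `0` (= `false`) of the string `s`. -/
def LastZeroAt (s : List Bool) (r : ℕ) : Prop :=
  s[r]? = some false ∧ ∀ j, r < j → j < s.length → s[j]? = some true

/-- Instances `s` and `t` (binary strings, each containing a `0`) are in conflict:
`t` is strictly longer, has the same number of `1`s, and agrees with `s` on all
positions up to (and including) the last `0` of `s`. -/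
def Conflict (s t : List Bool) : Prop :=
  s.length < t.length ∧ s.count true = t.count true ∧
    ∃ r, LastZeroAt s r ∧ s.take (r + 1) = t.take (r + 1)

lemma count_false_add_count_true (l : List Bool) :
    l.count false + l.count true = l.length := by
  induction l with
  | nil => simp
  | cons b l ih => cases b <;> simp [List.count_cons] <;> omega

lemma one_false_decomp (l : List Bool) (h : l.count false = 1) :
    ∃ k m, l = List.replicate k true ++ false :: List.replicate m true := by
  induction l with
  | nil => simp at h
  | cons b l ih =>
    cases b with
    | false =>
      have h0 : l.count false = 0 := by
        simp [List.count_cons] at h; omega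
      have hall : ∀ b ∈ l, b = true := by
        intro b hb
        cases b with
        | true => rfl
        | false => exact absurd hb (List.count_eq_zero.mp h0)
      refine ⟨0, l.length, ?_⟩
      have hrep : l = List.replicate l.length true := List.eq_replicate_iff.mpr ⟨rfl, hall⟩
      simp only [List.replicate_zero, List.nil_append]
      exact congrArg _ hrep
    | true =>
      have h1 : l.count false = 1 := by simpa [List.count_cons] using h
      obtain ⟨k, m, hl⟩ := ih h1
      exact ⟨k + 1, m, by simp [hl, List.replicate_succ]⟩

lemma lastZeroAt_unique {s : List Bool} {r r' : ℕ}
    (h : LastZeroAt s r) (h' : LastZeroAt s r') : r = r' := by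
  rcases lt_trichotomy r r' with hlt | he | hlt
  · have hlen : r' < s.length := (List.getElem?_eq_some_iff.mp h'.1).1
    have := h.2 r' hlt hlen
    rw [h'.1] at this; simp at this
  · exact he
  · have hlen : r < s.length := (List.getElem?_eq_some_iff.mp h.1).1
    have := h'.2 r hlt hlen
    rw [h.1] at this; simp at this

lemma drop_eq_replicate_of_lastZeroAt (I : List Bool) (r : ℕ) (hr : LastZeroAt I r) :
    I.drop (r + 1) = List.replicate (I.length - (r + 1)) true := by
  rw [List.eq_replicate_iff]
  refine ⟨by simp, fun b hb => ?_⟩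
  obtain ⟨i, hi⟩ := List.mem_iff_getElem?.mp hb
  rw [List.getElem?_drop] at hi
  have hlt : r + 1 + i < I.length := (List.getElem?_eq_some_iff.mp hi).1
  have := hr.2 (r + 1 + i) (by omega) hlt
  rw [hi] at this
  simpa using this

lemma get?_replicate_true (n i : ℕ) (h : i < n) :
    (List.replicate n true)[i]? = some true := by
  rw [List.getElem?_eq_some_iff]
  refine ⟨by simpa using h, ?_⟩
  simp [List.getElem_replicate]

lemma conflict_iff (I : List Bool) (r : ℕ) (hr : LastZeroAt I r) (t : List Bool)
    (ht : t.length = I.length + 1) :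
    Conflict I t ↔ ∃ j, r < j ∧ j ≤ I.length ∧ t = I.take j ++ false :: I.drop j := by
  have hrlt : r < I.length := (List.getElem?_eq_some_iff.mp hr.1).1
  constructor
  · rintro ⟨hlen, hcount, r', hr', htake⟩
    have hrr : r' = r := lastZeroAt_unique hr' hr
    rw [hrr] at htake
    have hrep : I.drop (r + 1) = List.replicate (I.length - (r + 1)) true :=
      drop_eq_replicate_of_lastZeroAt I r hr
    have hI := congrArg (List.count true) (List.take_append_drop (r + 1) I)
    have ht' := congrArg (List.count true) (List.take_append_drop (r + 1) t)
    rw [List.count_append] at hI ht'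
    have hcttake : (I.take (r + 1)).count true = (t.take (r + 1)).count true := by
      rw [htake]
    have hdropcount : (t.drop (r + 1)).count true = (I.drop (r + 1)).count true := by
      omega
    have hAlen : (t.drop (r + 1)).length = I.length - r := by
      simp [ht]
    have hAtrue : (t.drop (r + 1)).count true = I.length - (r + 1) := by
      rw [hdropcount, hrep, List.count_replicate]; simp
    have hAfalse : (t.drop (r + 1)).count false = 1 := by
      have := count_false_add_count_true (t.drop (r + 1))
      omega
    obtain ⟨k, m, hA⟩ := one_false_decomp _ hAfalse
    have hkm : k + 1 + m = I.length - r := by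
      have hlenA := congrArg List.length hA
      simp at hlenA
      omega
    refine ⟨r + 1 + k, by omega, by omega, ?_⟩
    have hIk : I.take (r + 1 + k) = I.take (r + 1) ++ List.replicate k true := by
      rw [List.take_add, hrep, List.take_replicate]
      congr 2
      omega
    have hIdrop : I.drop (r + 1 + k) = List.replicate m true := by
      rw [← List.drop_drop, hrep, List.drop_replicate]
      congr 1
      omega
    rw [hIk, hIdrop]
    calc t = t.take (r + 1) ++ t.drop (r + 1) := (List.take_append_drop _ _).symm
      _ = I.take (r + 1) ++ (List.replicate k true ++ false :: List.replicate m true) := by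
          rw [← htake, hA]
      _ = _ := by simp [List.append_assoc]
  · rintro ⟨j, hj1, hj2, rfl⟩
    refine ⟨by rw [ht]; omega, ?_, r, hr, ?_⟩
    · rw [List.count_append, List.count_cons]
      conv_lhs => rw [← List.take_append_drop j I, List.count_append]
      simp
    · have hjlen : (I.take j).length = j := by simp; omega
      rw [List.take_append_of_le_length (by rw [hjlen]; omega), List.take_take]
      congr 1
      omega

/-- The instances of size `n+1` in conflict with an instance `I` of size `n` are
exactly the strings obtained by inserting one `0` into `I` at a position strictly
after the last `0` of `I` (including at the end); consequently, if `I` has suffix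
`0` followed by `d-1` ones, it has exactly `d` such children. -/
theorem conflict_children (I : List Bool) (r : ℕ) (hr : LastZeroAt I r) :
    (∀ t : List Bool, t.length = I.length + 1 →
        (Conflict I t ↔ ∃ j, r < j ∧ j ≤ I.length ∧ t = I.take j ++ false :: I.drop j)) ∧
      ∀ d : ℕ, 1 ≤ d → (∀ u, I = u ++ false :: List.replicate (d - 1) true →
        {t : List Bool | t.length = I.length + 1 ∧ Conflict I t}.ncard = d) := by
  refine ⟨fun t ht => conflict_iff I r hr t ht, ?_⟩
  intro d hd u hu
  have hIlen : I.length = u.length + d := by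
    rw [hu]; simp; omega
  have hlz : LastZeroAt I u.length := by
    constructor
    · rw [hu, List.getElem?_append_right le_rfl]
      simp
    · intro j hj hjlen
      rw [hu, List.getElem?_append_right (by omega)]
      have h1 : j - u.length = (j - u.length - 1) + 1 := by omega
      rw [h1, List.getElem?_cons_succ]
      refine get?_replicate_true _ _ ?_
      rw [hIlen] at hjlen
      omega
  have hru : r = u.length := lastZeroAt_unique hr hlz
  classical
  have key : ∀ j1 j2, r < j1 → j2 ≤ I.length → j1 < j2 →
      I.take j1 ++ false :: I.drop j1 ≠ I.take j2 ++ false :: I.drop j2 := by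
    intro j1 j2 ha hb hab heq
    have hl1 : (I.take j1).length = j1 := by simp; omega
    have hl2 : (I.take j2).length = j2 := by simp; omega
    have e1 : (I.take j1 ++ false :: I.drop j1)[j1]? = some false := by
      rw [List.getElem?_append_right hl1.le, hl1]
      simp
    have e2 : (I.take j2 ++ false :: I.drop j2)[j1]? = some true := by
      rw [List.getElem?_append_left (by rw [hl2]; omega), List.getElem?_take_of_lt hab]
      exact hr.2 j1 ha (by omega)
    rw [heq, e2] at e1
    simp at e1
  have hset : {t : List Bool | t.length = I.length + 1 ∧ Conflict I t}
      = ↑((Finset.Ioc r I.length).image (fun j => I.take j ++ false :: I.drop j)) := by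
    ext t
    simp only [Set.mem_setOf_eq, Finset.coe_image, Set.mem_image, Finset.mem_coe,
      Finset.mem_Ioc]
    constructor
    · rintro ⟨htl, hc⟩
      obtain ⟨j, hj1, hj2, hjt⟩ := (conflict_iff I r hr t htl).mp hc
      exact ⟨j, ⟨hj1, hj2⟩, hjt.symm⟩
    · rintro ⟨j, ⟨hj1, hj2⟩, rfl⟩
      have htl : (I.take j ++ false :: I.drop j).length = I.length + 1 := by
        simp; omega
      exact ⟨htl, (conflict_iff I r hr _ htl).mpr ⟨j, hj1, hj2, rfl⟩⟩
  rw [hset, Set.ncard_coe_finset, Finset.card_image_of_injOn, Nat.card_Ioc]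
  · omega
  · intro j1 h1 j2 h2 heq
    simp only [Finset.coe_Ioc, Set.mem_Ioc] at h1 h2
    rcases Nat.lt_trichotomy j1 j2 with h | h | h
    · exact absurd heq (key j1 j2 h1.1 h2.2 h)
    · exact h
    · exact absurd heq.symm (key j2 j1 h2.1 h1.2 h)
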